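/- If a bijection r : {0,1}^ℓ → {0,...,2^ℓ-1} is chosen uniformly at random among all such bijections, then the expected point locality is E[p_r] = (2^ℓ + 1)/3. -/

import Mathlib

open Finset

private lemma gauss (n : ℕ) : ∑ a : Fin n, ((a : ℕ) : ℚ) = n * (n - 1) / 2 := by
  induction n with
  | zero => simp
  | succ m ih =>
    rw [Fin.sum_univ_castSucc]
    simp only [Fin.coe_castSucc, Fin.val_last]
    rw [ih]; push_cast; ring

private lemma absQ (x y : ℕ) : ((((x:ℤ) - (y:ℤ)).natAbs : ℚ)) = |(x:ℚ) - (y:ℚ)| := by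
  rw [Nat.cast_natAbs]
  push_cast
  ring_nf

private lemma sumAbsQ (n : ℕ) :
    ∑ a : Fin n, ∑ b : Fin n, |((a:ℕ):ℚ) - ((b:ℕ):ℚ)| = (n^3 - n)/3 := by
  induction n with
  | zero => simp
  | succ m ih =>
    have hb : ∀ x : ℚ, (∑ b : Fin (m+1), |x - ((b:ℕ):ℚ)|) =
        (∑ b : Fin m, |x - ((b:ℕ):ℚ)|) + |x - (m:ℚ)| := by
      intro x
      rw [Fin.sum_univ_castSucc]
      simp
    rw [Fin.sum_univ_castSucc]
    simp only [hb, Fin.coe_castSucc, Fin.val_last]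
    rw [Finset.sum_add_distrib, ih]
    have h1 : ∀ a : Fin m, |((a:ℕ):ℚ) - (m:ℚ)| = (m:ℚ) - ((a:ℕ):ℚ) := by
      intro a
      rw [abs_sub_comm, abs_of_nonneg]
      have := a.isLt
      have : ((a:ℕ):ℚ) ≤ (m:ℚ) := by exact_mod_cast this.le
      linarith
    have h2 : ∀ b : Fin m, |(m:ℚ) - ((b:ℕ):ℚ)| = (m:ℚ) - ((b:ℕ):ℚ) := by
      intro b
      rw [abs_of_nonneg]
      have := b.isLt
      have : ((b:ℕ):ℚ) ≤ (m:ℚ) := by exact_mod_cast this.le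
      linarith
    simp only [h1, h2, sub_self, abs_zero, add_zero]
    have hsum : ∑ x : Fin m, ((m:ℚ) - ((x:ℕ):ℚ)) = (m:ℚ)*m - m*(m-1)/2 := by
      rw [Finset.sum_sub_distrib, gauss]
      simp [Finset.card_univ, mul_comm]
    rw [hsum]
    push_cast
    ring

private lemma sum_pair_eq {α : Type*} [Fintype α] [DecidableEq α] {n : ℕ}
    {p q p' q' : α} (hpq : p ≠ q) (h' : p' ≠ q') :
    ∑ r : α ≃ Fin n, |((r p : ℕ) : ℚ) - ((r q : ℕ) : ℚ)| =
    ∑ r : α ≃ Fin n, |((r p' : ℕ) : ℚ) - ((r q' : ℕ) : ℚ)| := by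
  obtain ⟨e, hep, heq⟩ : ∃ e : Equiv.Perm α, e p' = p ∧ e q' = q := by
    refine ⟨(Equiv.swap p' p).trans (Equiv.swap ((Equiv.swap p' p) q') q), ?_, ?_⟩
    · simp only [Equiv.trans_apply, Equiv.swap_apply_left]
      apply Equiv.swap_apply_of_ne_of_ne
      · intro h
        apply h'
        have := (Equiv.swap p' p).injective (h.symm.trans (Equiv.swap_apply_left p' p).symm)
        exact this.symm ▸ rfl
      · exact hpq
    · simp only [Equiv.trans_apply, Equiv.swap_apply_left]
  let ι : (α ≃ Fin n) ≃ (α ≃ Fin n) :=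
    { toFun := fun r => e.trans r
      invFun := fun r => e.symm.trans r
      left_inv := fun r => by ext x; simp
      right_inv := fun r => by ext x; simp }
  rw [← Equiv.sum_comp ι (fun r : α ≃ Fin n => |((r p' : ℕ) : ℚ) - ((r q' : ℕ) : ℚ)|)]
  refine Finset.sum_congr rfl fun r _ => ?_
  simp only [ι, Equiv.coe_fn_mk, Equiv.trans_apply, hep, heq]

private lemma key {α : Type*} [Fintype α] [DecidableEq α] (n : ℕ)
    {p q : α} (hpq : p ≠ q) :
    (Fintype.card α : ℚ) * ((Fintype.card α : ℚ) - 1) *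
      ∑ r : α ≃ Fin n, |((r p : ℕ) : ℚ) - ((r q : ℕ) : ℚ)| =
    (Fintype.card (α ≃ Fin n) : ℚ) * (((n:ℚ)^3 - n)/3) := by
  have h1 : ∀ r : α ≃ Fin n,
      ∑ p' : α, ∑ q' : α, |((r p' : ℕ) : ℚ) - ((r q' : ℕ) : ℚ)| = ((n:ℚ)^3 - n)/3 := by
    intro r
    have := sumAbsQ n
    calc ∑ p' : α, ∑ q' : α, |((r p' : ℕ) : ℚ) - ((r q' : ℕ) : ℚ)|
        = ∑ a : Fin n, ∑ q' : α, |((a : ℕ) : ℚ) - ((r q' : ℕ) : ℚ)| :=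
          Equiv.sum_comp r (fun a : Fin n => ∑ q' : α, |((a : ℕ) : ℚ) - ((r q' : ℕ) : ℚ)|)
      _ = ∑ a : Fin n, ∑ b : Fin n, |((a : ℕ) : ℚ) - ((b : ℕ) : ℚ)| :=
          Finset.sum_congr rfl fun a _ =>
            Equiv.sum_comp r (fun b : Fin n => |((a : ℕ) : ℚ) - ((b : ℕ) : ℚ)|)
      _ = ((n:ℚ)^3 - n)/3 := by exact_mod_cast this
  have h2 : ∑ p' : α, ∑ q' : α, ∑ r : α ≃ Fin n, |((r p' : ℕ) : ℚ) - ((r q' : ℕ) : ℚ)|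
      = (Fintype.card (α ≃ Fin n) : ℚ) * (((n:ℚ)^3 - n)/3) := by
    rw [Finset.sum_comm]
    have : ∀ q' : α, ∑ p' : α, ∑ r : α ≃ Fin n, |((r p' : ℕ) : ℚ) - ((r q' : ℕ) : ℚ)|
        = ∑ r : α ≃ Fin n, ∑ p' : α, |((r p' : ℕ) : ℚ) - ((r q' : ℕ) : ℚ)| :=
      fun q' => Finset.sum_comm
    simp only [this]
    rw [Finset.sum_comm]
    rw [Finset.sum_congr rfl fun r _ => (Finset.sum_comm.trans (h1 r))]
    simp [Finset.card_univ, mul_comm]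
  have hcard1 : (1:ℕ) ≤ Fintype.card α := by
    have : Nonempty α := ⟨p⟩
    exact Fintype.card_pos
  have h3 : ∀ p' : α, ∑ q' : α, ∑ r : α ≃ Fin n, |((r p' : ℕ) : ℚ) - ((r q' : ℕ) : ℚ)|
      = ((Fintype.card α : ℚ) - 1) * ∑ r : α ≃ Fin n, |((r p : ℕ) : ℚ) - ((r q : ℕ) : ℚ)| := by
    intro p'
    rw [← Finset.sum_erase_add _ _ (Finset.mem_univ p')]
    have hz : ∑ r : α ≃ Fin n, |((r p' : ℕ) : ℚ) - ((r p' : ℕ) : ℚ)| = 0 := by simp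
    rw [hz, add_zero]
    rw [Finset.sum_congr rfl (fun q' hq' =>
      sum_pair_eq (Finset.ne_of_mem_erase hq').symm hpq)]
    rw [Finset.sum_const, Finset.card_erase_of_mem (Finset.mem_univ _), Finset.card_univ,
      nsmul_eq_mul, Nat.cast_sub hcard1, Nat.cast_one]
  rw [Finset.sum_congr rfl fun p' _ => h3 p'] at h2
  rw [Finset.sum_const, Finset.card_univ, nsmul_eq_mul] at h2
  rw [← mul_assoc] at h2
  exact h2

/-- The expected point locality of a uniformly random bijection
`r : {0,1}^ℓ → {0,...,2^ℓ-1}` is `(2^ℓ + 1)/3`: averaging the point locality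
over all bijections gives `(2^ℓ + 1)/3`. -/
theorem expected_point_locality (ℓ : ℕ) (hℓ : 1 ≤ ℓ) :
    (∑ r : (Fin ℓ → Bool) ≃ Fin (2 ^ ℓ),
        ((∑ s : Fin ℓ → Bool, ∑ i : Fin ℓ,
            (((r (Function.update s i (!s i)) : ℕ) : ℤ) - ((r s : ℕ) : ℤ)).natAbs : ℚ))
          / (ℓ * 2 ^ ℓ))
      / (Fintype.card ((Fin ℓ → Bool) ≃ Fin (2 ^ ℓ)))
      = (2 ^ ℓ + 1) / 3 := by
  set α := (Fin ℓ → Bool)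
  have hcard : Fintype.card α = 2 ^ ℓ := by
    simp [α, Fintype.card_fun]
  set E := Fintype.card (α ≃ Fin (2 ^ ℓ)) with hE
  have hEpos : 0 < E := by
    have e : α ≃ Fin (2 ^ ℓ) := Fintype.equivFinOfCardEq hcard
    exact Fintype.card_pos_iff.mpr ⟨e⟩
  have hn2 : (2:ℚ) ≤ (2:ℚ) ^ ℓ := by
    calc (2:ℚ) = 2^1 := (pow_one 2).symm
    _ ≤ 2^ℓ := by exact pow_le_pow_right₀ (by norm_num) hℓ
  have hnne : ((2:ℚ)^ℓ) * ((2:ℚ)^ℓ - 1) ≠ 0 := by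
    apply mul_ne_zero <;> nlinarith
  have hval : ∀ (s : α) (i : Fin ℓ),
      ∑ r : α ≃ Fin (2 ^ ℓ),
        |((r (Function.update s i (!s i)) : ℕ) : ℚ) - ((r s : ℕ) : ℚ)|
      = (E : ℚ) * (((2:ℚ)^ℓ + 1) / 3) := by
    intro s i
    have hne : Function.update s i (!s i) ≠ s := by
      intro h
      have := congrFun h i
      simp [Function.update_self] at this
    have hk := key (α := α) (2 ^ ℓ) hne
    rw [hcard] at hk
    apply mul_left_cancel₀ hnne
    push_cast at hk
    rw [hk]
    ring
  rw [← Finset.sum_div]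
  simp only [absQ]
  rw [Finset.sum_comm]
  have hswap : ∀ s : α, ∑ r : α ≃ Fin (2 ^ ℓ), ∑ i : Fin ℓ,
        |((r (Function.update s i (!s i)) : ℕ) : ℚ) - ((r s : ℕ) : ℚ)|
      = ∑ i : Fin ℓ, ∑ r : α ≃ Fin (2 ^ ℓ),
        |((r (Function.update s i (!s i)) : ℕ) : ℚ) - ((r s : ℕ) : ℚ)| :=
    fun s => Finset.sum_comm
  rw [Finset.sum_congr rfl fun s _ => hswap s]
  simp only [hval]
  rw [Finset.sum_const, Finset.sum_const, Finset.card_univ, Finset.card_univ, hcard,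
    Fintype.card_fin, nsmul_eq_mul, nsmul_eq_mul]
  have hℓne : ((ℓ:ℚ)) ≠ 0 := by exact_mod_cast Nat.one_le_iff_ne_zero.mp hℓ
  have hEne : ((E:ℚ)) ≠ 0 := by exact_mod_cast hEpos.ne'
  push_cast
  field_simp
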